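/- Let k ≥ 1, a ≥ 1, b ≥ 0 and c ≥ 1 be integers, and let p be a prime such that p ≤ c·L_k and p ∤ c·L_k. Then the smallest period of g_{p,k,φ} is P_{p,k,φ} = ∏_q q, where the product ranges over all primes q such that q | c, q ∤ a and p | (q − 1). -/

import Mathlib

/-- `L k = lcm (1, 2, …, k)`. -/
def Lk (k : ℕ) : ℕ := (Finset.Icc 1 k).lcm id

/-- `g_{k,φ} (n) = (∏_{i=0}^{k} φ (b + a (n + i c))) / φ (lcm_{0 ≤ i ≤ k} (b + a (n + i c)))`. -/
def gkphi (k a b c n : ℕ) : ℚ :=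
  (∏ i ∈ Finset.range (k + 1), ((b + a * (n + i * c)).totient : ℚ)) /
    (((Finset.range (k + 1)).lcm fun i => b + a * (n + i * c)).totient : ℚ)

namespace LocalPeriodAux

open Finset


/-- local factor of `v_p (φ (q ^ e))`. -/
def hh (p q e : ℕ) : ℕ :=
  if e = 0 then 0 else (e - 1) * (if q = p then 1 else 0) + (q - 1).factorization p

@[simp] lemma hh_zero (p q : ℕ) : hh p q 0 = 0 := rfl

def Tq (p k a b c n q : ℕ) : ℤ :=
  (∑ i ∈ Finset.range (k+1), (hh p q ((b + a*(n+i*c)).factorization q) : ℤ))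
  - (hh p q (((Finset.range (k+1)).lcm (fun i => b + a*(n+i*c))).factorization q) : ℤ)


lemma hh_self (p : ℕ) (hp : p.Prime) (e : ℕ) : hh p p e = e - 1 := by
  have hp2 := hp.two_le
  have h1 : ¬ p ∣ (p - 1) := by
    intro h
    have := Nat.le_of_dvd (by omega) h
    omega
  have h2 : (p - 1).factorization p = 0 := Nat.factorization_eq_zero_of_not_dvd h1
  unfold hh
  split
  · simp_all
  · simp_all

lemma hh_ne (p q e : ℕ) (hqp : q ≠ p) : hh p q e = if e = 0 then 0 else (q-1).factorization p := by
  unfold hh; split <;> simp_all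

lemma fact_ne_zero_dvd {q N : ℕ} (h : N.factorization q ≠ 0) : q ∣ N := by
  have : q ∈ N.primeFactors := by
    rw [← Nat.support_factorization]; exact Finsupp.mem_support_iff.2 h
  exact Nat.dvd_of_mem_primeFactors this

/-- if at most one index has `e i ≠ 0` then `∑ f (e i) = f (sup e)` for `f 0 = 0`. -/
lemma sum_eq_sup {ι : Type*} (s : Finset ι) (e : ι → ℕ) (f : ℕ → ℕ) (hf0 : f 0 = 0)
    (huniq : ∀ i ∈ s, ∀ j ∈ s, e i ≠ 0 → e j ≠ 0 → i = j) :
    ∑ i ∈ s, f (e i) = f (s.sup e) := by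
  by_cases hex : ∃ i ∈ s, e i ≠ 0
  · obtain ⟨i0, hi0, he0⟩ := hex
    have hsup : s.sup e = e i0 := by
      refine le_antisymm (Finset.sup_le fun j hj => ?_) (Finset.le_sup hi0)
      by_cases hej : e j = 0
      · simp [hej]
      · exact le_of_eq (congrArg e (huniq j hj i0 hi0 hej he0))
    rw [hsup, Finset.sum_eq_single_of_mem i0 hi0]
    intro j hj hne
    have : e j = 0 := by
      by_contra h
      exact hne (huniq j hj i0 hi0 h he0)
    rw [this, hf0]
  · push_neg at hex
    have hsup : s.sup e = 0 := by
      refine Nat.le_zero.mp (Finset.sup_le fun j hj => Nat.le_zero.mpr (hex j hj))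
    rw [hsup, hf0]
    refine Finset.sum_eq_zero fun j hj => by rw [hex j hj, hf0]

lemma at_most_one (a' b' c k q n : ℕ) (hq : q.Prime) (hqa : ¬ q ∣ a') (hqc : ¬ q ∣ c)
    (hkq : k < q) :
    ∀ i ∈ Finset.range (k+1), ∀ j ∈ Finset.range (k+1),
      q ∣ b' + a' * (n + i * c) → q ∣ b' + a' * (n + j * c) → i = j := by
  have key : ∀ i j, i ≤ j → j ≤ k →
      q ∣ b' + a' * (n + i * c) → q ∣ b' + a' * (n + j * c) → i = j := by
    intro i j hij hjk h1 h2
    obtain ⟨d, rfl⟩ := Nat.exists_eq_add_of_le hij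
    have heq : b' + a' * (n + (i + d) * c) = (b' + a' * (n + i * c)) + a' * (c * d) := by ring
    rw [heq] at h2
    have hd : q ∣ a' * (c * d) := (Nat.dvd_add_right h1).mp h2
    rcases (hq.dvd_mul.mp hd) with h | h
    · exact absurd h hqa
    · rcases (hq.dvd_mul.mp h) with h | h
      · exact absurd h hqc
      · have : d = 0 := by
          rcases Nat.eq_zero_or_pos d with h0 | h0
          · exact h0
          · exact absurd (Nat.le_of_dvd h0 h) (by omega)
        omega
  intro i hi j hj h1 h2
  simp only [Finset.mem_range] at hi hj
  rcases le_total i j with h | h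
  · exact key i j h (by omega) h1 h2
  · exact (key j i h (by omega) h2 h1).symm

lemma fact_add_eq {p x y : ℕ} (hp : p.Prime) (hx : x ≠ 0) (hy : y ≠ 0)
    (h : x.factorization p < y.factorization p) :
    (x + y).factorization p = x.factorization p := by
  set u := x.factorization p with hu
  have hxy : x + y ≠ 0 := by omega
  have h1 : p ^ u ∣ x := Nat.ordProj_dvd x p
  have h2 : p ^ (u+1) ∣ y := by
    refine dvd_trans (pow_dvd_pow p (by omega)) (Nat.ordProj_dvd y p)
  have h3 : p ^ u ∣ x + y := dvd_add h1 ((pow_dvd_pow p (by omega)).trans (Nat.ordProj_dvd y p))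
  have h4 : ¬ p ^ (u+1) ∣ x + y := by
    intro hdvd
    have hx' : p ^ (u+1) ∣ x := by
      have := Nat.dvd_sub hdvd h2
      simpa using this
    have := (Nat.Prime.pow_dvd_iff_le_factorization hp hx).mp hx'
    omega
  refine le_antisymm ?_ ((Nat.Prime.pow_dvd_iff_le_factorization hp hxy).mp h3)
  by_contra hlt
  exact h4 ((Nat.Prime.pow_dvd_iff_le_factorization hp hxy).mpr (by omega))




lemma totient_fact (p : ℕ) {N : ℕ} (hN : N ≠ 0) (U : Finset ℕ)
    (hU : N.primeFactors ⊆ U) :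
    (Nat.totient N).factorization p = ∑ q ∈ U, hh p q (N.factorization q) := by
  have step1 : (Nat.totient N).factorization p
      = ∑ q ∈ N.primeFactors, hh p q (N.factorization q) := by
    rw [Nat.totient_eq_prod_factorization hN]
    rw [Finsupp.prod]
    rw [Nat.support_factorization]
    have hne : ∀ q ∈ N.primeFactors, q ^ (N.factorization q - 1) * (q - 1) ≠ 0 := by
      intro q hq
      have hq2 := (Nat.prime_of_mem_primeFactors hq).two_le
      have he : 1 ≤ q ^ (N.factorization q - 1) := Nat.one_le_pow _ _ (by omega)
      have : 1 ≤ q - 1 := by omega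
      positivity
    rw [Nat.factorization_prod hne]
    rw [Finset.sum_apply']
    refine Finset.sum_congr rfl fun q hq => ?_
    have hqp := Nat.prime_of_mem_primeFactors hq
    have hq2 := hqp.two_le
    have he : N.factorization q ≠ 0 := by
      rw [← Nat.support_factorization] at hq
      exact Finsupp.mem_support_iff.mp hq
    rw [Nat.factorization_mul (by positivity) (by omega)]
    rw [Finsupp.add_apply]
    rw [hqp.factorization_pow]
    rw [Finsupp.single_apply]
    unfold hh
    rw [if_neg he]
    by_cases hqe : q = p <;> simp [hqe]
  rw [step1]
  refine Finset.sum_subset hU fun q hq hnq => ?_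
  have : N.factorization q = 0 := by
    rw [← Nat.support_factorization] at hnq
    exact Finsupp.notMem_support_iff.mp hnq
  rw [this]; rfl

lemma lcm_ne_zero {ι : Type*} [DecidableEq ι] (s : Finset ι) (f : ι → ℕ) (hf : ∀ i ∈ s, f i ≠ 0) :
    s.lcm f ≠ 0 := by
  induction s using Finset.induction with
  | empty => simp
  | @insert a s ha ih =>
    rw [Finset.lcm_insert]
    have h1 : f a ≠ 0 := hf a (Finset.mem_insert_self a s)
    have h2 : s.lcm f ≠ 0 := ih fun i hi => hf i (Finset.mem_insert_of_mem hi)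
    exact Nat.lcm_ne_zero h1 h2

lemma fact_lcm {ι : Type*} [DecidableEq ι] (s : Finset ι) (f : ι → ℕ) (hf : ∀ i ∈ s, f i ≠ 0) (q : ℕ) :
    (s.lcm f).factorization q = s.sup fun i => (f i).factorization q := by
  induction s using Finset.induction with
  | empty => simp
  | @insert a s ha ih =>
    rw [Finset.lcm_insert, Finset.sup_insert]
    have h1 : f a ≠ 0 := hf a (Finset.mem_insert_self a s)
    have h2 : s.lcm f ≠ 0 := lcm_ne_zero s f fun i hi => hf i (Finset.mem_insert_of_mem hi)
    have : lcm (f a) (s.lcm f) = Nat.lcm (f a) (s.lcm f) := rfl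
    rw [this, Nat.factorization_lcm h1 h2, Finsupp.sup_apply,
      ih fun i hi => hf i (Finset.mem_insert_of_mem hi)]








lemma val_eq_sum (p k a b c n : ℕ) (hp : p.Prime) (ha : 1 ≤ a) (hn : 1 ≤ n)
    (U : Finset ℕ)
    (hU : (((Finset.range (k+1)).lcm (fun i => b + a*(n+i*c))).primeFactors : Finset ℕ) ⊆ U) :
    padicValRat p (gkphi k a b c n) = ∑ q ∈ U, Tq p k a b c n q := by
  haveI : Fact p.Prime := ⟨hp⟩
  set N : ℕ → ℕ := fun i => b + a*(n+i*c) with hN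
  have hNn : ∀ i ∈ Finset.range (k+1), N i ≠ 0 := by
    intro i _
    have : 0 < a * (n + i * c) := Nat.mul_pos (by omega) (by omega)
    simp only [hN]; omega
  set L : ℕ := (Finset.range (k+1)).lcm N with hL
  have hLn : L ≠ 0 := lcm_ne_zero _ _ hNn
  have hphiL : (Nat.totient L) ≠ 0 := Nat.totient_pos.2 (Nat.pos_of_ne_zero hLn) |>.ne'
  have hphiN : ∀ i ∈ Finset.range (k+1), (Nat.totient (N i)) ≠ 0 :=
    fun i hi => Nat.totient_pos.2 (Nat.pos_of_ne_zero (hNn i hi)) |>.ne'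
  have hprod : (∏ i ∈ Finset.range (k+1), ((Nat.totient (N i)) : ℚ))
      = ((∏ i ∈ Finset.range (k+1), Nat.totient (N i) : ℕ) : ℚ) := by push_cast; ring
  have hprodne : (∏ i ∈ Finset.range (k+1), Nat.totient (N i) : ℕ) ≠ 0 :=
    Finset.prod_ne_zero_iff.2 hphiN
  have step1 : padicValRat p (gkphi k a b c n)
      = (padicValNat p (∏ i ∈ Finset.range (k+1), Nat.totient (N i)) : ℤ)
        - (padicValNat p (Nat.totient L) : ℤ) := by
    unfold gkphi
    rw [hprod]
    rw [padicValRat.div (by exact_mod_cast hprodne) (by exact_mod_cast hphiL)]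
    rw [padicValRat.of_nat, padicValRat.of_nat]
  rw [step1]
  have hfp : ∀ m : ℕ, m ≠ 0 → padicValNat p m = m.factorization p :=
    fun m _ => (Nat.factorization_def m hp).symm
  rw [hfp _ hprodne, hfp _ hphiL]
  have hfac : (∏ i ∈ Finset.range (k+1), Nat.totient (N i)).factorization p
      = ∑ i ∈ Finset.range (k+1), (Nat.totient (N i)).factorization p := by
    rw [Nat.factorization_prod hphiN, Finset.sum_apply']
  rw [hfac]
  have hsub : ∀ i ∈ Finset.range (k+1), (N i).primeFactors ⊆ U := by
    intro i hi
    exact subset_trans (Nat.primeFactors_mono (Finset.dvd_lcm hi) hLn) hU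
  have hNeq : ∀ i ∈ Finset.range (k+1), (Nat.totient (N i)).factorization p
      = ∑ q ∈ U, hh p q ((N i).factorization q) :=
    fun i hi => totient_fact p (hNn i hi) U (hsub i hi)
  rw [Finset.sum_congr rfl hNeq, totient_fact p hLn U hU]
  rw [Finset.sum_comm]
  push_cast
  rw [← Finset.sum_sub_distrib]
  rfl






lemma Nne (a b c n : ℕ) (ha : 1 ≤ a) (hn : 1 ≤ n) :
    ∀ i ∈ Finset.range (k+1), b + a*(n+i*c) ≠ 0 := by
  intro i _
  have : 0 < a * (n + i * c) := Nat.mul_pos (by omega) (by omega)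
  omega

lemma Tq_zero_w0 (p k a b c n q : ℕ) (hqp : q ≠ p) (hw : (q-1).factorization p = 0) :
    Tq p k a b c n q = 0 := by
  have h : ∀ e, hh p q e = 0 := by
    intro e; unfold hh
    split
    · rfl
    · simp [hqp, hw]
  unfold Tq
  simp [h]

lemma Tq_zero_not_dvd (p k a b c n q : ℕ) (hq : q.Prime) (hqa : ¬ q ∣ a) (hqc : ¬ q ∣ c)
    (hkq : k < q) (ha : 1 ≤ a) (hn : 1 ≤ n) :
    Tq p k a b c n q = 0 := by
  unfold Tq
  rw [fact_lcm _ _ (Nne a b c n ha hn) q]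
  have huniq : ∀ i ∈ Finset.range (k+1), ∀ j ∈ Finset.range (k+1),
      (b + a*(n+i*c)).factorization q ≠ 0 → (b + a*(n+j*c)).factorization q ≠ 0 → i = j := by
    intro i hi j hj h1 h2
    exact at_most_one a b c k q n hq hqa hqc hkq i hi j hj
      (fact_ne_zero_dvd h1) (fact_ne_zero_dvd h2)
  have := sum_eq_sup (Finset.range (k+1)) (fun i => (b + a*(n+i*c)).factorization q)
    (hh p q) rfl huniq
  push_cast [← this]
  ring

lemma Tq_dvd_ac (p k a b c n q : ℕ) (hq : q.Prime) (hqp : q ≠ p) (hqac : q ∣ a * c)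
    (ha : 1 ≤ a) (hn : 1 ≤ n) :
    Tq p k a b c n q
      = (k:ℤ) * ((q-1).factorization p) * (if q ∣ b + a*n then 1 else 0) := by
  have hNn := Nne (k := k) a b c n ha hn
  have hdvd_iff : ∀ i, q ∣ b + a*(n+i*c) ↔ q ∣ b + a*n := by
    intro i
    have heq : b + a*(n+i*c) = (b + a*n) + (a*c)*i := by ring
    have hD : q ∣ (a*c)*i := hqac.mul_right i
    rw [heq]
    constructor
    · intro h
      have := Nat.dvd_sub h hD
      simpa using this
    · intro h; exact Nat.dvd_add h hD
  unfold Tq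
  rw [fact_lcm _ _ hNn q]
  by_cases hbn : q ∣ b + a*n
  · have he : ∀ i ∈ Finset.range (k+1), (b + a*(n+i*c)).factorization q ≠ 0 := by
      intro i hi
      exact (hq.factorization_pos_of_dvd (hNn i hi) ((hdvd_iff i).mpr hbn)).ne'
    have hhval : ∀ e : ℕ, e ≠ 0 → hh p q e = (q-1).factorization p := by
      intro e he0; unfold hh; rw [if_neg he0, if_neg hqp]; ring
    have hsum : ∑ i ∈ Finset.range (k+1), (hh p q ((b + a*(n+i*c)).factorization q) : ℤ)
        = (k+1) * ((q-1).factorization p) := by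
      rw [Finset.sum_congr rfl (fun i hi => by rw [hhval _ (he i hi)])]
      rw [Finset.sum_const, Finset.card_range]
      push_cast; ring
    have hsup : (Finset.range (k+1)).sup (fun i => (b + a*(n+i*c)).factorization q) ≠ 0 := by
      intro h0
      have h1 := Finset.le_sup (f := fun i => (b + a*(n+i*c)).factorization q) (b := 0)
          (Finset.mem_range.mpr (Nat.succ_pos k))
      rw [h0] at h1
      exact he 0 (Finset.mem_range.mpr (Nat.succ_pos k)) (Nat.le_zero.mp h1)
    rw [hsum, hhval _ hsup, if_pos hbn]
    push_cast; ring
  · have he : ∀ i ∈ Finset.range (k+1), (b + a*(n+i*c)).factorization q = 0 := by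
      intro i hi
      refine Nat.factorization_eq_zero_of_not_dvd ?_
      exact fun h => hbn ((hdvd_iff i).mp h)
    have hsup : (Finset.range (k+1)).sup (fun i => (b + a*(n+i*c)).factorization q) = 0 := by
      refine Nat.le_zero.mp (Finset.sup_le fun i hi => le_of_eq (he i hi))
    rw [Finset.sum_congr rfl (fun i hi => by rw [he i hi])]
    rw [hsup, if_neg hbn]
    simp [hh]






lemma Tp_eq (p k a b c n : ℕ) (hp : p.Prime) (hpc : ¬ p ∣ c) (hkp : k < p)
    (ha : 1 ≤ a) (hn : 1 ≤ n) :
    Tq p k a b c n p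
      = (k:ℤ) * (((if b = 0 then a.factorization p else
          min (a.factorization p) (b.factorization p)) - 1 : ℕ) : ℤ) := by
  have hNn := Nne (k := k) a b c n ha hn
  unfold Tq
  rw [fact_lcm _ _ hNn p]
  by_cases hpa : p ∣ a
  · set v := a.factorization p with hv
    have hv1 : 1 ≤ v := hp.factorization_pos_of_dvd (by omega) hpa
    by_cases hcase : b ≠ 0 ∧ b.factorization p < v
    · -- all valuations equal b.factorization p
      obtain ⟨hb0, hu⟩ := hcase
      set u := b.factorization p with hu'
      have he : ∀ i, (b + a*(n+i*c)).factorization p = u := by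
        intro i
        have hx : a * (n + i*c) ≠ 0 := by positivity --?
        have hfa : v ≤ (a * (n + i*c)).factorization p := by
          rw [Nat.factorization_mul (by omega) (by positivity)]
          simp only [Finsupp.add_apply]
          omega
        exact fact_add_eq hp hb0 hx (by omega)
      have hsup : (Finset.range (k+1)).sup (fun i => (b + a*(n+i*c)).factorization p) = u := by
        apply le_antisymm
        · exact Finset.sup_le fun i _ => le_of_eq (he i)
        · have h2 : (b + a*(n+0*c)).factorization p
              ≤ (Finset.range (k+1)).sup (fun i => (b + a*(n+i*c)).factorization p) := by
            simpa using Finset.le_sup (f := fun i => (b + a*(n+i*c)).factorization p)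
              (Finset.mem_range.mpr (Nat.succ_pos k))
          rw [he 0] at h2
          exact h2
      rw [hsup]
      rw [Finset.sum_congr rfl (fun i _ => by rw [he i, hh_self p hp u])]
      rw [Finset.sum_const, Finset.card_range, hh_self p hp u]
      rw [if_neg hb0, min_eq_right (by omega)]
      push_cast
      ring
    · -- p^v divides everything; pull out p^v
      have hdvdb : p ^ v ∣ b := by
        by_cases hb : b = 0
        · simp [hb]
        · push_neg at hcase
          have := hcase hb
          calc p ^ v ∣ p ^ (b.factorization p) := pow_dvd_pow p (by omega)
          _ ∣ b := Nat.ordProj_dvd b p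
      have hdvda : p ^ v ∣ a := Nat.ordProj_dvd a p
      obtain ⟨a', haeq⟩ := hdvda
      obtain ⟨b', hbeq⟩ := hdvdb
      have hpv : (0:ℕ) < p ^ v := pow_pos hp.pos v
      have ha'0 : a' ≠ 0 := by
        intro h
        rw [h, mul_zero] at haeq
        omega
      have hpa' : ¬ p ∣ a' := by
        intro hd
        obtain ⟨t, rfl⟩ := hd
        have hdd : p^(v+1) ∣ a := ⟨t, by rw [haeq]; ring⟩
        have := (Nat.Prime.pow_dvd_iff_le_factorization hp (show a ≠ 0 by omega)).mp hdd
        omega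
      have hMn : ∀ i, b' + a'*(n+i*c) ≠ 0 := by
        intro i
        have h3 : 0 < a' * (n + i*c) := Nat.mul_pos (Nat.pos_of_ne_zero ha'0) (show 0 < n + i*c by omega)
        omega
      have hNeq : ∀ i, b + a*(n+i*c) = p ^ v * (b' + a'*(n+i*c)) := by
        intro i
        rw [haeq, hbeq]; ring
      set f : ℕ → ℕ := fun i => (b' + a'*(n+i*c)).factorization p with hf
      have he : ∀ i, (b + a*(n+i*c)).factorization p = v + f i := by
        intro i
        rw [hNeq i, Nat.factorization_mul (by omega) (hMn i)]
        simp only [Finsupp.add_apply]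
        rw [hp.factorization_pow, Finsupp.single_apply, if_pos rfl]
      -- at most one f i nonzero
      have huniq : ∀ i ∈ Finset.range (k+1), ∀ j ∈ Finset.range (k+1),
          f i ≠ 0 → f j ≠ 0 → i = j := by
        intro i hi j hj h1 h2
        exact at_most_one a' b' c k p n hp hpa' hpc hkp i hi j hj
          (fact_ne_zero_dvd h1) (fact_ne_zero_dvd h2)
      set F := (Finset.range (k+1)).sup f with hF
      have hsumf : ∑ i ∈ Finset.range (k+1), f i = F :=
        sum_eq_sup (Finset.range (k+1)) f id rfl huniq
      have hsup : (Finset.range (k+1)).sup (fun i => (b + a*(n+i*c)).factorization p)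
          = v + F := by
        apply le_antisymm
        · refine Finset.sup_le fun i hi => ?_
          rw [he i]
          exact Nat.add_le_add_left (Finset.le_sup hi) v
        · obtain ⟨i0, hi0, hFi⟩ := Finset.exists_mem_eq_sup (Finset.range (k+1))
            (Finset.nonempty_range_add_one) f
          have h2 : (b + a*(n+i0*c)).factorization p
              ≤ (Finset.range (k+1)).sup (fun i => (b + a*(n+i*c)).factorization p) := by
            simpa using Finset.le_sup (f := fun i => (b + a*(n+i*c)).factorization p) hi0
          rw [he i0] at h2
          rw [hF, hFi]
          exact h2
      rw [hsup, hh_self p hp]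
      have hterm : ∀ i ∈ Finset.range (k+1),
          (hh p p ((b + a*(n+i*c)).factorization p) : ℤ) = (v:ℤ) - 1 + f i := by
        intro i _
        rw [he i, hh_self p hp]
        have : 1 ≤ v + f i := by omega
        push_cast [Nat.cast_sub this]
        ring
      rw [Finset.sum_congr rfl hterm]
      rw [Finset.sum_add_distrib, Finset.sum_const, Finset.card_range]
      have hcast : ((∑ i ∈ Finset.range (k+1), f i : ℕ) : ℤ) = (F : ℤ) := by
        exact_mod_cast hsumf
      push_cast at hcast ⊢
      rw [hcast]
      have hmin : (if b = 0 then v else min v (b.factorization p)) = v := by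
        by_cases hb : b = 0
        · rw [if_pos hb]
        · push_neg at hcase
          rw [if_neg hb, min_eq_left (by have := hcase hb; omega)]
      rw [hmin]
      have h1 : ((v - 1 : ℕ) : ℤ) = (v:ℤ) - 1 := by
        push_cast [Nat.cast_sub hv1]; ring
      rw [h1]
      have hvF : 1 ≤ v + F := by omega
      rw [Nat.cast_sub hvF]
      push_cast
      ring
  · -- p does not divide a: Tq = 0 and RHS = 0
    have hv0 : a.factorization p = 0 := Nat.factorization_eq_zero_of_not_dvd hpa
    have huniq : ∀ i ∈ Finset.range (k+1), ∀ j ∈ Finset.range (k+1),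
        (b + a*(n+i*c)).factorization p ≠ 0 → (b + a*(n+j*c)).factorization p ≠ 0 → i = j := by
      intro i hi j hj h1 h2
      exact at_most_one a b c k p n hp hpa hpc hkp i hi j hj
        (fact_ne_zero_dvd h1) (fact_ne_zero_dvd h2)
    have := sum_eq_sup (Finset.range (k+1)) (fun i => (b + a*(n+i*c)).factorization p)
      (hh p p) rfl huniq
    rw [hv0]
    simp only [Nat.zero_min, min_def]
    have hrhs : (if b = 0 then 0 else if 0 ≤ b.factorization p then 0 else b.factorization p) = 0 := by
      split <;> simp
    rw [hrhs]
    push_cast [← this]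
    ring

lemma crt_exists (s : Finset ℕ) (hs : ∀ q ∈ s, q.Prime) (r : ℕ → ℕ) :
    ∃ n : ℕ, ∀ q ∈ s, n ≡ r q [MOD q] := by
  have hz : ∀ q ∈ s, (id q : ℕ) ≠ 0 := fun q hq => (hs q hq).pos.ne'
  have pp : Set.Pairwise s (Function.onFun Nat.Coprime id) := by
    intro x hx y hy hxy
    exact (Nat.coprime_primes (hs x hx) (hs y hy)).mpr hxy
  obtain ⟨n, hn⟩ := Nat.chineseRemainderOfFinset r id s hz pp
  exact ⟨n, hn⟩

lemma exists_r1 (q a b : ℕ) (hq : q.Prime) (hqa : ¬ q ∣ a) : ∃ r : ℕ, q ∣ b + a * r := by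
  haveI := Fact.mk hq
  have ha0 : (a : ZMod q) ≠ 0 := by
    rw [Ne, ZMod.natCast_eq_zero_iff]; exact hqa
  refine ⟨((-(b : ZMod q)) * (a : ZMod q)⁻¹).val, ?_⟩
  rw [← ZMod.natCast_eq_zero_iff]
  push_cast
  rw [ZMod.natCast_val, ZMod.cast_id]
  field_simp
  ring

lemma exists_r2 (q a b T : ℕ) (hq : q.Prime) (hq3 : 3 ≤ q) (hqa : ¬ q ∣ a) :
    ∃ r : ℕ, ¬ q ∣ b + a * r ∧ ¬ q ∣ b + a * (r + T) := by
  haveI := Fact.mk hq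
  have ha0 : (a : ZMod q) ≠ 0 := by
    rw [Ne, ZMod.natCast_eq_zero_iff]; exact hqa
  set bad1 : ZMod q := (-(b : ZMod q)) * (a : ZMod q)⁻¹ with hbad1
  set bad2 : ZMod q := (-(b : ZMod q) - (a : ZMod q) * T) * (a : ZMod q)⁻¹ with hbad2
  have hx : ∃ x : ZMod q, x ≠ bad1 ∧ x ≠ bad2 := by
    by_contra h
    push_neg at h
    have hsub : (Finset.univ : Finset (ZMod q)) ⊆ {bad1, bad2} := by
      intro x _
      rcases Classical.em (x = bad1) with h1 | h1
      · simp [h1]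
      · simp [h x h1]
    have hcard := Finset.card_le_card hsub
    rw [Finset.card_univ, ZMod.card] at hcard
    have : ({bad1, bad2} : Finset (ZMod q)).card ≤ 2 :=
      le_trans (Finset.card_insert_le _ _) (by simp)
    omega
  obtain ⟨x, hx1, hx2⟩ := hx
  refine ⟨x.val, ?_, ?_⟩
  · intro hdvd
    rw [← ZMod.natCast_eq_zero_iff] at hdvd
    push_cast at hdvd
    rw [ZMod.natCast_val, ZMod.cast_id] at hdvd
    apply hx1
    rw [hbad1]
    field_simp at hdvd ⊢
    linear_combination hdvd
  · intro hdvd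
    rw [← ZMod.natCast_eq_zero_iff] at hdvd
    push_cast at hdvd
    rw [ZMod.natCast_val, ZMod.cast_id] at hdvd
    apply hx2
    rw [hbad2]
    field_simp at hdvd ⊢
    linear_combination hdvd








lemma Tq_dichotomy (p k a b c n m q : ℕ) (hp : p.Prime) (hq : q.Prime) (hpc : ¬ p ∣ c)
    (hkp : k < p) (ha : 1 ≤ a) (hn : 1 ≤ n) (hm : 1 ≤ m) :
    Tq p k a b c n q - Tq p k a b c m q =
      if q ∣ c ∧ ¬ q ∣ a ∧ p ∣ (q-1) then
        (k:ℤ) * ((q-1).factorization p) *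
          ((if q ∣ b + a*n then (1:ℤ) else 0) - (if q ∣ b + a*m then (1:ℤ) else 0))
      else 0 := by
  by_cases hqp : q = p
  · subst hqp
    rw [if_neg (fun h => hpc h.1)]
    rw [Tp_eq q k a b c n hp hpc hkp ha hn, Tp_eq q k a b c m hp hpc hkp ha hm]
    ring
  · by_cases hw : (q-1).factorization p = 0
    · have hcond : ¬ (q ∣ c ∧ ¬ q ∣ a ∧ p ∣ (q-1)) := by
        rintro ⟨-, -, hpd⟩
        have := hp.factorization_pos_of_dvd (show q - 1 ≠ 0 by have := hq.two_le; omega) hpd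
        omega
      rw [if_neg hcond, Tq_zero_w0 p k a b c n q hqp hw, Tq_zero_w0 p k a b c m q hqp hw]
      ring
    · have hpd : p ∣ q - 1 := fact_ne_zero_dvd hw
      have hq2 := hq.two_le
      have hkq : k < q := by
        have := Nat.le_of_dvd (by omega) hpd
        omega
      by_cases hqa : q ∣ a
      · have hcond : ¬ (q ∣ c ∧ ¬ q ∣ a ∧ p ∣ (q-1)) := fun h => h.2.1 hqa
        rw [if_neg hcond]
        rw [Tq_dvd_ac p k a b c n q hq hqp (hqa.mul_right c) ha hn,
          Tq_dvd_ac p k a b c m q hq hqp (hqa.mul_right c) ha hm]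
        have hiff : ∀ t : ℕ, q ∣ b + a * t ↔ q ∣ b := by
          intro t
          have hD : q ∣ a * t := hqa.mul_right t
          constructor
          · intro h
            have := Nat.dvd_sub h hD
            simpa using this
          · intro h; exact Nat.dvd_add h hD
        rw [if_congr (hiff n) rfl rfl, if_congr (hiff m) rfl rfl]
        ring
      · by_cases hqc : q ∣ c
        · rw [if_pos ⟨hqc, hqa, hpd⟩]
          rw [Tq_dvd_ac p k a b c n q hq hqp (hqc.mul_left a) ha hn,
            Tq_dvd_ac p k a b c m q hq hqp (hqc.mul_left a) ha hm]
          ring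
        · have hcond : ¬ (q ∣ c ∧ ¬ q ∣ a ∧ p ∣ (q-1)) := fun h => hqc h.1
          rw [if_neg hcond, Tq_zero_not_dvd p k a b c n q hq hqa hqc hkq ha hn,
            Tq_zero_not_dvd p k a b c m q hq hqa hqc hkq ha hm]
          ring

lemma diff_eq (p k a b c n m : ℕ) (hp : p.Prime) (hpc : ¬ p ∣ c) (hkp : k < p)
    (ha : 1 ≤ a) (hc : 1 ≤ c) (hn : 1 ≤ n) (hm : 1 ≤ m) :
    padicValRat p (gkphi k a b c n) - padicValRat p (gkphi k a b c m)
      = ∑ q ∈ c.divisors.filter (fun q => q.Prime ∧ ¬ q ∣ a ∧ p ∣ (q - 1)),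
          (k:ℤ) * ((q-1).factorization p) *
            ((if q ∣ b + a*n then (1:ℤ) else 0) - (if q ∣ b + a*m then (1:ℤ) else 0)) := by
  classical
  set S := c.divisors.filter (fun q => q.Prime ∧ ¬ q ∣ a ∧ p ∣ (q - 1)) with hS
  set U := ((((Finset.range (k+1)).lcm (fun i => b + a*(n+i*c))).primeFactors : Finset ℕ)
    ∪ (((Finset.range (k+1)).lcm (fun i => b + a*(m+i*c))).primeFactors : Finset ℕ)) ∪ S with hU
  have hU1 : (((Finset.range (k+1)).lcm (fun i => b + a*(n+i*c))).primeFactors : Finset ℕ) ⊆ U :=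
    subset_trans Finset.subset_union_left Finset.subset_union_left
  have hU2 : (((Finset.range (k+1)).lcm (fun i => b + a*(m+i*c))).primeFactors : Finset ℕ) ⊆ U :=
    subset_trans Finset.subset_union_right Finset.subset_union_left
  have hSU : S ⊆ U := Finset.subset_union_right
  have hUprime : ∀ q ∈ U, q.Prime := by
    intro q hq
    rcases Finset.mem_union.mp hq with h | h
    · rcases Finset.mem_union.mp h with h' | h'
      · exact Nat.prime_of_mem_primeFactors h'
      · exact Nat.prime_of_mem_primeFactors h'
    · exact (Finset.mem_filter.mp h).2.1
  rw [val_eq_sum p k a b c n hp ha hn U hU1, val_eq_sum p k a b c m hp ha hm U hU2,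
    ← Finset.sum_sub_distrib]
  rw [Finset.sum_congr rfl (fun q hq =>
    Tq_dichotomy p k a b c n m q hp (hUprime q hq) hpc hkp ha hn hm)]
  rw [Finset.sum_ite, Finset.sum_const_zero, add_zero]
  apply Finset.sum_congr _ (fun q _ => rfl)
  ext q
  simp only [Finset.mem_filter, hS, Nat.mem_divisors]
  constructor
  · rintro ⟨hqU, hdc, hda, hpd⟩
    exact ⟨⟨hdc, by omega⟩, hUprime q hqU, hda, hpd⟩
  · rintro ⟨⟨hdc, -⟩, hprime, hda, hpd⟩
    refine ⟨hSU ?_, hdc, hda, hpd⟩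
    rw [hS]
    exact Finset.mem_filter.mpr ⟨Nat.mem_divisors.mpr ⟨hdc, by omega⟩, hprime, hda, hpd⟩

end LocalPeriodAux

open LocalPeriodAux in
/-- Lemma 3.4: for a prime `p ≤ c L_k` with `p ∤ c L_k`, the smallest period of
`g_{p,k,φ} (n) = v_p (g_{k,φ} (n))` is `∏_{q prime, q ∣ c, q ∤ a, p ∣ q − 1} q`. -/
theorem smallest_local_period_not_dvd_cLk (k a b c : ℕ)
    (hk : 1 ≤ k) (ha : 1 ≤ a) (hc : 1 ≤ c)
    (p : ℕ) (hp : p.Prime) (hple : p ≤ c * Lk k) (hpndvd : ¬ p ∣ c * Lk k) :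
    IsLeast {T : ℕ | 0 < T ∧ ∀ n : ℕ, 0 < n →
        padicValRat p (gkphi k a b c (n + T)) = padicValRat p (gkphi k a b c n)}
      (∏ q ∈ c.divisors.filter (fun q => q.Prime ∧ ¬ q ∣ a ∧ p ∣ (q - 1)), q) := by
  classical
  set S := c.divisors.filter (fun q => q.Prime ∧ ¬ q ∣ a ∧ p ∣ (q - 1)) with hSdef
  set P := ∏ q ∈ S, q with hPdef
  have hpc : ¬ p ∣ c := fun h => hpndvd (h.mul_right _)
  have hpL : ¬ p ∣ Lk k := fun h => hpndvd (h.mul_left _)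
  have hkp : k < p := by
    by_contra h
    push_neg at h
    exact hpL (Finset.dvd_lcm (f := id) (Finset.mem_Icc.mpr ⟨hp.pos, h⟩))
  have hSprime : ∀ q ∈ S, q.Prime := fun q hq => (Finset.mem_filter.mp hq).2.1
  have hSfacts : ∀ q ∈ S, q ∣ c ∧ ¬ q ∣ a ∧ p ∣ (q - 1) := by
    intro q hq
    obtain ⟨hd, h1, h2, h3⟩ := Finset.mem_filter.mp hq
    exact ⟨(Nat.mem_divisors.mp hd).1, h2, h3⟩
  have hq3 : ∀ q ∈ S, 3 ≤ q := by
    intro q hq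
    obtain ⟨-, -, h3⟩ := hSfacts q hq
    have hq2 := (hSprime q hq).two_le
    have hp2 := hp.two_le
    have := Nat.le_of_dvd (by omega) h3
    omega
  have hPpos : 0 < P := Finset.prod_pos fun q hq => (hSprime q hq).pos
  constructor
  · refine ⟨hPpos, fun n hn => ?_⟩
    have hd := diff_eq p k a b c (n + P) n hp hpc hkp ha hc (by omega) hn
    have hzero : ∑ q ∈ S,
        (k:ℤ) * ((q-1).factorization p) *
          ((if q ∣ b + a*(n+P) then (1:ℤ) else 0) - (if q ∣ b + a*n then (1:ℤ) else 0)) = 0 := by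
      refine Finset.sum_eq_zero fun q hq => ?_
      have hqP : q ∣ P := Finset.dvd_prod_of_mem _ hq
      have hiff : q ∣ b + a*(n+P) ↔ q ∣ b + a*n := by
        have heq : b + a*(n+P) = (b + a*n) + a*P := by ring
        have hD : q ∣ a*P := hqP.mul_left a
        rw [heq]
        constructor
        · intro h
          have := Nat.dvd_sub h hD
          simpa using this
        · intro h; exact Nat.dvd_add h hD
      rw [if_congr hiff rfl rfl]
      ring
    rw [hzero] at hd
    exact sub_eq_zero.mp hd
  · rintro T ⟨hT0, hTper⟩
    have hdvd : ∀ q ∈ S, q ∣ T := by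
      intro q hqS
      by_contra hqT
      obtain ⟨hqc, hqa, hqpd⟩ := hSfacts q hqS
      have hqprime := hSprime q hqS
      obtain ⟨r1, hr1⟩ := exists_r1 q a b hqprime hqa
      set r : ℕ → ℕ := fun q' =>
        if q' = q then r1
        else if h : q' ∈ S then
          (exists_r2 q' a b T (hSprime q' h) (hq3 q' h) (hSfacts q' h).2.1).choose
        else 0 with hrdef
      obtain ⟨n0, hn0⟩ := crt_exists S hSprime r
      set n := n0 + P with hndef
      have hn1 : 1 ≤ n := by omega
      have hmod : ∀ q' ∈ S, n ≡ r q' [MOD q'] := by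
        intro q' hq'
        have h1 : P ≡ 0 [MOD q'] := (Nat.modEq_zero_iff_dvd).mpr (Finset.dvd_prod_of_mem _ hq')
        have h2 : n ≡ n0 + 0 [MOD q'] := (Nat.ModEq.refl n0).add h1
        simpa using h2.trans (hn0 q' hq')
      have hmodlin : ∀ q' ∈ S, ∀ t : ℕ, b + a*(n+t) ≡ b + a*(r q' + t) [MOD q'] := by
        intro q' hq' t
        exact (Nat.ModEq.refl b).add (((hmod q' hq').add_right t).mul_left a)
      -- q divides b + a n but not b + a (n+T)
      have hqn : q ∣ b + a*n := by
        have h := hmodlin q hqS 0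
        simp only [add_zero] at h
        rw [hrdef] at h
        simp only [if_pos rfl] at h
        exact (Nat.modEq_zero_iff_dvd).mp ((h.trans ((Nat.modEq_zero_iff_dvd).mpr hr1)))
      have hqnT : ¬ q ∣ b + a*(n+T) := by
        intro h
        have heq : b + a*(n+T) = (b + a*n) + a*T := by ring
        rw [heq] at h
        have hD : q ∣ a*T := by
          have := Nat.dvd_sub h hqn
          simpa using this
        rcases hqprime.dvd_mul.mp hD with h' | h'
        · exact hqa h'
        · exact hqT h'
      -- other primes divide neither
      have hother : ∀ q' ∈ S, q' ≠ q → ¬ q' ∣ b + a*n ∧ ¬ q' ∣ b + a*(n+T) := by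
        intro q' hq' hne
        have hspec := (exists_r2 q' a b T (hSprime q' hq') (hq3 q' hq')
          (hSfacts q' hq').2.1).choose_spec
        have hrq : r q' = (exists_r2 q' a b T (hSprime q' hq') (hq3 q' hq')
            (hSfacts q' hq').2.1).choose := by
          rw [hrdef]
          simp only [if_neg hne, dif_pos hq']
        constructor
        · intro h
          have hcong := hmodlin q' hq' 0
          simp only [add_zero] at hcong
          have : q' ∣ b + a*(r q') :=
            (Nat.modEq_zero_iff_dvd).mp (hcong.symm.trans ((Nat.modEq_zero_iff_dvd).mpr h))
          rw [hrq] at this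
          exact hspec.1 this
        · intro h
          have hcong := hmodlin q' hq' T
          have : q' ∣ b + a*(r q' + T) :=
            (Nat.modEq_zero_iff_dvd).mp (hcong.symm.trans ((Nat.modEq_zero_iff_dvd).mpr h))
          rw [hrq] at this
          exact hspec.2 this
      -- now apply periodicity and the difference formula
      have hper := hTper n hn1
      have hd := diff_eq p k a b c (n + T) n hp hpc hkp ha hc (by omega) hn1
      rw [hper, sub_self] at hd
      have hsum : ∑ q' ∈ S,
          (k:ℤ) * ((q'-1).factorization p) *
            ((if q' ∣ b + a*(n+T) then (1:ℤ) else 0) - (if q' ∣ b + a*n then (1:ℤ) else 0))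
          = -((k:ℤ) * ((q-1).factorization p)) := by
        rw [Finset.sum_eq_single_of_mem q hqS]
        · rw [if_neg hqnT, if_pos hqn]
          ring
        · intro q' hq' hne
          obtain ⟨h1, h2⟩ := hother q' hq' hne
          rw [if_neg h1, if_neg h2]
          ring
      rw [hsum] at hd
      have hw : 0 < (q-1).factorization p :=
        hp.factorization_pos_of_dvd (by have := hqprime.two_le; omega) hqpd
      have hk1 : (1:ℤ) ≤ (k:ℤ) := by exact_mod_cast hk
      have hw1 : (1:ℤ) ≤ ((q-1).factorization p : ℤ) := by exact_mod_cast hw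
      nlinarith
    have hPdvd : P ∣ T :=
      Finset.prod_primes_dvd T (fun q hq => (hSprime q hq).prime) hdvd
    exact Nat.le_of_dvd hT0 hPdvd
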